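/- Let g satisfy the Orlicz structure conditions with indices 1 ≤ i_g ≤ s_g < ∞ and define V_g : ℝⁿ → ℝⁿ by V_g(z) = (g(|z|)/|z|)^{1/2}·z for z ≠ 0 and V_g(0) = 0. Then there exist constants 0 < c₁ ≤ c₂, depending only on n, i_g and s_g, such that for all z₁, z₂ ∈ ℝⁿ not both zero: c₁·(g(|z₁|+|z₂|)/(|z₁|+|z₂|))·|z₁−z₂|² ≤ |V_g(z₁) − V_g(z₂)|² ≤ c₂·(g(|z₁|+|z₂|)/(|z₁|+|z₂|))·|z₁−z₂|². -/

import Mathlib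

open Real Set

lemma orlicz_aux_M1 (g g' : ℝ → ℝ) (ig : ℝ)
    (hg_nonneg : ∀ t, 0 ≤ t → 0 ≤ g t)
    (hg_deriv : ∀ t, 0 < t → HasDerivAt g (g' t) t)
    (h_one_le_ig : 1 ≤ ig)
    (h_lower : ∀ t, 0 < t → ig * g t ≤ t * g' t)
    {u v : ℝ} (hu : 0 < u) (huv : u ≤ v) : g u / u ≤ g v / v := by
  have hder : ∀ t : ℝ, 0 < t →
      HasDerivAt (fun t => g t / t) ((g' t * t - g t * 1) / t ^ 2) t :=
    fun t ht => (hg_deriv t ht).div (hasDerivAt_id t) ht.ne'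
  have hmono : MonotoneOn (fun t => g t / t) (Set.Ici u) := by
    apply monotoneOn_of_deriv_nonneg (convex_Ici u)
    · intro t ht
      exact ((hder t (lt_of_lt_of_le hu ht)).continuousAt).continuousWithinAt
    · intro t ht
      rw [interior_Ici] at ht
      exact ((hder t (hu.trans ht)).differentiableAt).differentiableWithinAt
    · intro t ht
      rw [interior_Ici] at ht
      have ht0 : 0 < t := hu.trans ht
      rw [(hder t ht0).deriv]
      have h1 := h_lower t ht0
      have h2 := hg_nonneg t ht0.le
      have h3 : g t ≤ t * g' t := le_trans (le_mul_of_one_le_left h2 h_one_le_ig) h1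
      have h4 : 0 ≤ g' t * t - g t * 1 := by nlinarith
      exact div_nonneg h4 (sq_nonneg t)
  exact hmono (self_mem_Ici) (le_trans (le_refl u) huv |>.trans_eq rfl |> fun _ => huv) huv

lemma orlicz_aux_M2 (g g' : ℝ → ℝ) (sg : ℝ)
    (hg_deriv : ∀ t, 0 < t → HasDerivAt g (g' t) t)
    (h_upper : ∀ t, 0 < t → t * g' t ≤ sg * g t)
    {u v : ℝ} (hu : 0 < u) (huv : u ≤ v) : g v / v ^ sg ≤ g u / u ^ sg := by
  have hder : ∀ t : ℝ, 0 < t →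
      HasDerivAt (fun t => g t / t ^ sg)
        ((g' t * t ^ sg - g t * (sg * t ^ (sg - 1))) / (t ^ sg) ^ 2) t :=
    fun t ht => (hg_deriv t ht).div (Real.hasDerivAt_rpow_const (Or.inl ht.ne'))
      (Real.rpow_pos_of_pos ht sg).ne'
  have hanti : AntitoneOn (fun t => g t / t ^ sg) (Set.Ici u) := by
    apply antitoneOn_of_deriv_nonpos (convex_Ici u)
    · intro t ht
      exact ((hder t (lt_of_lt_of_le hu ht)).continuousAt).continuousWithinAt
    · intro t ht
      rw [interior_Ici] at ht
      exact ((hder t (hu.trans ht)).differentiableAt).differentiableWithinAt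
    · intro t ht
      rw [interior_Ici] at ht
      have ht0 : 0 < t := hu.trans ht
      rw [(hder t ht0).deriv]
      have h1 := h_upper t ht0
      have hts : t ^ sg = t ^ (sg - 1) * t := by
        rw [← Real.rpow_add_one ht0.ne', sub_add_cancel]
      have hX : 0 ≤ t ^ (sg - 1) := Real.rpow_nonneg ht0.le _
      have h4 : g' t * t ^ sg - g t * (sg * t ^ (sg - 1)) ≤ 0 := by
        rw [hts]
        nlinarith [mul_nonneg hX (sub_nonneg.2 h1)]
      exact div_nonpos_of_nonpos_of_nonneg h4 (by positivity)
  exact hanti self_mem_Ici huv huv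

set_option maxHeartbeats 1000000 in
lemma orlicz_scalar (g : ℝ → ℝ) (sg A : ℝ)
    (hsg1 : 1 ≤ sg) (hA2 : 2 ≤ A)
    (hg_nonneg : ∀ t, 0 ≤ t → 0 ≤ g t)
    (hg0 : g 0 = 0)
    (hgpos : ∀ t, 0 < t → 0 < g t)
    (hM1 : ∀ u v : ℝ, 0 < u → u ≤ v → g u / u ≤ g v / v)
    (gmono : ∀ u v : ℝ, 0 ≤ u → u ≤ v → g u ≤ g v)
    (hDouble : ∀ u v : ℝ, 0 < u → u ≤ v → v ≤ 2*u → g v ≤ A * g u)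
    (hRatio : ∀ u v : ℝ, 0 < u → u ≤ v → g v * (u/v) ^ sg ≤ g u)
    (hBern : ∀ x : ℝ, 0 ≤ x → x ≤ 1 → x - x ^ sg ≤ sg * (1 - x))
    (a b d p N : ℝ)
    (ha : 0 < a) (hb0 : 0 ≤ b) (hba : b ≤ a)
    (hp : p ≤ a * b) (hdab : a - b ≤ d) (hdab2 : d ≤ a + b) (hd0 : 0 ≤ d)
    (hdsq : d ^ 2 = a ^ 2 - 2 * p + b ^ 2)
    (hN : N = Real.sqrt (g a / a) ^ 2 * a ^ 2
        - 2 * (Real.sqrt (g a / a) * Real.sqrt (g b / b) * p)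
        + Real.sqrt (g b / b) ^ 2 * b ^ 2) :
    1/(9*A^2) * (g (a+b) / (a+b)) * d ^ 2 ≤ N ∧
      N ≤ 2*(1+sg)^2 * (g (a+b) / (a+b)) * d ^ 2 := by
  have hsg0 : 0 ≤ sg := by linarith
  have hA0 : 0 < A := by linarith
  have hA' : A ≠ 0 := hA0.ne'
  have ha' : a ≠ 0 := ha.ne'
  set Fa := Real.sqrt (g a / a) with hFa'
  set Fb := Real.sqrt (g b / b) with hFb'
  have hFa0 : 0 ≤ Fa := Real.sqrt_nonneg _
  have hFb0 : 0 ≤ Fb := Real.sqrt_nonneg _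
  have hFa2 : Fa ^ 2 = g a / a := Real.sq_sqrt (div_nonneg (hg_nonneg a ha.le) ha.le)
  have hFb2 : Fb ^ 2 = g b / b := by
    rcases eq_or_lt_of_le hb0 with h | h
    · rw [hFb', ← h, hg0]; simp
    · exact Real.sq_sqrt (div_nonneg (hg_nonneg b h.le) h.le)
  have hFba : Fb ≤ Fa := by
    apply Real.sqrt_le_sqrt
    rcases eq_or_lt_of_le hb0 with h | h
    · rw [← h]; simpa using div_nonneg (hg_nonneg a ha.le) ha.le
    · exact hM1 b a h hba
  have hs : 0 < a + b := by linarith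
  have hsa : a ≤ a + b := by linarith
  have hs2a : a + b ≤ 2*a := by linarith
  have hgsA : g (a+b) ≤ A * g a := hDouble a (a+b) ha hsa hs2a
  have hgs_div : g (a+b) / (a+b) ≤ A * g a / a :=
    div_le_div₀ (mul_nonneg hA0.le (hg_nonneg a ha.le)) hgsA ha hsa
  have hgs0 : 0 ≤ g (a+b) / (a+b) := div_nonneg (hg_nonneg _ hs.le) hs.le
  have h9A : (0:ℝ) < 9 * A^2 := by positivity
  -- key upper step : (Fa - Fb) * b ≤ sg * Fa * (a - b)
  have hub2 : (Fa - Fb) * b ≤ sg * Fa * (a - b) := by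
    rcases eq_or_lt_of_le hb0 with h | hbp
    · rw [← h]
      have h0 : 0 ≤ sg * Fa * (a - 0) := mul_nonneg (mul_nonneg hsg0 hFa0) (by linarith)
      linarith
    · have hb' : b ≠ 0 := hbp.ne'
      have hFap : 0 < Fa := Real.sqrt_pos.2 (div_pos (hgpos a ha) ha)
      have hx0 : (0:ℝ) ≤ b/a := by positivity
      have hx1 : b/a ≤ 1 := (div_le_one ha).2 hba
      have hbern := hBern (b/a) hx0 hx1
      have hrat := hRatio b a hbp hba
      have e1 : (Fa - Fb) * Fa ≤ Fa^2 - Fb^2 := by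
        have id1 : Fa^2 - Fb^2 - (Fa - Fb)*Fa = Fb*(Fa - Fb) := by ring
        linarith [mul_nonneg hFb0 (sub_nonneg.2 hFba)]
      have e2 : (Fa^2 - Fb^2) * b = g a * (b/a) - g b := by
        rw [hFa2, hFb2]; field_simp
      have e5 : g a * ((b/a) - (b/a)^sg) ≤ g a * (sg * (1 - b/a)) :=
        mul_le_mul_of_nonneg_left hbern (hg_nonneg a ha.le)
      have e6 : g a * (sg * (1 - b/a)) = sg * (g a / a) * (a - b) := by
        field_simp
      have final : ((Fa - Fb) * b) * Fa ≤ (sg * Fa * (a - b)) * Fa := by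
        have e7 : (sg * Fa * (a-b)) * Fa = sg * (g a / a) * (a - b) := by
          rw [← hFa2]; ring
        calc ((Fa - Fb) * b) * Fa = ((Fa - Fb) * Fa) * b := by ring
          _ ≤ (Fa^2 - Fb^2) * b := mul_le_mul_of_nonneg_right e1 hb0
          _ = g a * (b/a) - g b := e2
          _ ≤ g a * (b/a) - g a * (b/a)^sg := by linarith
          _ = g a * ((b/a) - (b/a)^sg) := by ring
          _ ≤ g a * (sg * (1 - b/a)) := e5
          _ = sg * (g a / a) * (a - b) := e6
          _ = (sg * Fa * (a-b)) * Fa := e7.symm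
      exact le_of_mul_le_mul_right final hFap
  constructor
  · -- LOWER BOUND
    by_cases hcase : 2*b ≤ a
    · -- case 1 : b small
      have hb2 : b ≤ a/2 := by linarith
      have hN1 : (Fa*a - Fb*b)^2 ≤ N := by
        have id1 : N - (Fa*a - Fb*b)^2 = 2*(Fa*Fb)*(a*b - p) := by rw [hN]; ring
        have h1 := mul_nonneg (mul_nonneg hFa0 hFb0) (sub_nonneg.2 hp)
        linarith
      have h5 : (Fa*a/2)^2 = g a * a / 4 := by
        rw [div_pow, mul_pow, hFa2]; field_simp; ring
      have hFbb : Fb * b ≤ Fa * a / 2 := by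
        have hgbb : (g b / b) * b^2 = g b * b := by
          rcases eq_or_lt_of_le hb0 with h | h
          · rw [← h]; simp
          · have hb' : b ≠ 0 := h.ne'
            field_simp
        have h1 : (Fb*b)^2 = g b * b := by rw [mul_pow, hFb2, hgbb]
        have h2 : g b * b ≤ g (a/2) * (a/2) :=
          mul_le_mul (gmono b (a/2) hb0 hb2) hb2 hb0 (hg_nonneg (a/2) (by linarith))
        have h3 : g (a/2) ≤ g a / 2 := by
          have h := hM1 (a/2) a (by linarith) (by linarith)
          rw [div_le_div_iff₀ (by linarith) ha] at h
          nlinarith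
        have h4 : (Fb*b)^2 ≤ (Fa*a/2)^2 := by
          rw [h1, h5]
          have h6 : g (a/2) * (a/2) ≤ (g a/2) * (a/2) :=
            mul_le_mul_of_nonneg_right h3 (by linarith)
          linarith
        have h6 := Real.sqrt_le_sqrt h4
        rwa [Real.sqrt_sq (mul_nonneg hFb0 hb0), Real.sqrt_sq (by linarith [mul_nonneg hFa0 ha.le])] at h6
      have hVlow : g a * a / 4 ≤ N := by
        have h7 : Fa*a/2 ≤ Fa*a - Fb*b := by
          have : 0 ≤ Fa*a/2 - Fb*b := by linarith
          linarith
        have h8 : (Fa*a/2)^2 ≤ (Fa*a - Fb*b)^2 := pow_le_pow_left₀ (by linarith [mul_nonneg hFa0 ha.le]) h7 2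
        linarith [hN1, h5.symm.le, h5.le]
      have hds : d ≤ 3/2*a := by linarith
      have h10 : d^2 ≤ 9/4*a^2 := by nlinarith
      calc 1/(9*A^2) * (g (a+b)/(a+b)) * d^2
          ≤ 1/(9*A^2) * (A * g a / a) * (9/4*a^2) := by
            apply mul_le_mul (mul_le_mul_of_nonneg_left hgs_div (by positivity)) h10
              (sq_nonneg d)
              (mul_nonneg (by positivity) (div_nonneg (mul_nonneg hA0.le (hg_nonneg a ha.le)) ha.le))
        _ = g a * a / (4*A) := by field_simp
        _ ≤ g a * a / 4 := by
            apply div_le_div_of_nonneg_left (by nlinarith [hg_nonneg a ha.le]) (by norm_num)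
            linarith
        _ ≤ N := hVlow
    · -- case 2 : b comparable to a
      push_neg at hcase
      have hbp : 0 < b := by linarith
      have hb' : b ≠ 0 := hbp.ne'
      have hc0 : (0:ℝ) < 2/A := by positivity
      have hc1 : 2/A ≤ 1 := by rw [div_le_one hA0]; exact hA2
      have hFb2c : (2/A) * Fa^2 ≤ Fb^2 := by
        rw [hFa2, hFb2]
        have h1 : g (a/2) / (a/2) ≤ g b / b := hM1 (a/2) b (by linarith) (by linarith)
        have h2 : g a ≤ A * g (a/2) := hDouble (a/2) a (by linarith) (by linarith) (by linarith)
        calc (2/A) * (g a / a) ≤ (2/A) * ((A * g (a/2)) / a) := by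
              apply mul_le_mul_of_nonneg_left _ hc0.le
              exact div_le_div_of_nonneg_right h2 ha.le
          _ = g (a/2) / (a/2) := by field_simp
          _ ≤ g b / b := h1
      have hFbc : (2/A) * Fa ≤ Fb := by
        have hcc : (2/A)^2 ≤ 2/A := by nlinarith
        have h1 : ((2/A) * Fa)^2 ≤ Fb^2 := by
          have id1 : ((2/A)*Fa)^2 = (2/A)^2 * Fa^2 := by ring
          have h2 : (2/A)^2 * Fa^2 ≤ (2/A) * Fa^2 :=
            mul_le_mul_of_nonneg_right hcc (sq_nonneg Fa)
          linarith
        have h2 := Real.sqrt_le_sqrt h1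
        rwa [Real.sqrt_sq (mul_nonneg hc0.le hFa0), Real.sqrt_sq hFb0] at h2
      have hcoefp : 0 ≤ Fa * Fb - (2/A) * Fa^2 := by
        have h1 := mul_le_mul_of_nonneg_left hFbc hFa0
        have id1 : Fa * ((2/A)*Fa) = (2/A)*Fa^2 := by ring
        linarith
      have hh : Fb * (a - b) ≤ Fa * a - Fb * b := by
        have h1 := mul_nonneg (sub_nonneg.2 hFba) ha.le
        have id1 : Fa*a - Fb*b - Fb*(a-b) = (Fa - Fb)*a := by ring
        linarith
      have hh0 : 0 ≤ Fb * (a - b) := mul_nonneg hFb0 (by linarith)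
      have hsq : Fb^2 * (a-b)^2 ≤ (Fa*a - Fb*b)^2 := by
        have h1 := pow_le_pow_left₀ hh0 hh 2
        have id1 : (Fb*(a-b))^2 = Fb^2*(a-b)^2 := by ring
        linarith
      have hD : (2/A) * Fa^2 * d^2 ≤ N := by
        rw [hN, hdsq]
        have id1 : (Fa^2*a^2 - 2*(Fa*Fb*p) + Fb^2*b^2) - (2/A)*Fa^2*(a^2 - 2*p + b^2)
            = ((Fa*a - Fb*b)^2 - Fb^2*(a-b)^2)
              + (Fb^2*(a-b)^2 - (2/A)*Fa^2*(a-b)^2)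
              + 2*((a*b - p)*(Fa*Fb - (2/A)*Fa^2)) := by ring
        have h1 := mul_nonneg (sub_nonneg.2 hp) hcoefp
        have h2 := mul_le_mul_of_nonneg_right hFb2c (sq_nonneg (a-b))
        linarith
      have hfinal : 1/(9*A^2) * (g (a+b)/(a+b)) ≤ (2/A) * Fa^2 := by
        have hFa2low : g (a+b) / (a+b) ≤ A * Fa^2 := by
          rw [hFa2]
          calc g (a+b)/(a+b) ≤ A * g a / a := hgs_div
            _ = A * (g a / a) := by ring
        rw [div_mul_eq_mul_div, one_mul, div_mul_eq_mul_div, div_le_div_iff₀ h9A hA0]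
        have h1 := mul_le_mul_of_nonneg_right hFa2low hA0.le
        have h2 : 0 ≤ Fa^2 * (A*A) := mul_nonneg (sq_nonneg Fa) (mul_nonneg hA0.le hA0.le)
        nlinarith
      calc 1/(9*A^2) * (g (a+b)/(a+b)) * d^2 ≤ (2/A) * Fa^2 * d^2 :=
            mul_le_mul_of_nonneg_right hfinal (sq_nonneg d)
        _ ≤ N := hD
  · -- UPPER BOUND
    have h1 : 0 ≤ Fa * (Fa - Fb) := mul_nonneg hFa0 (sub_nonneg.2 hFba)
    have h2 : 0 ≤ b^2 - p + b*d := by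
      have h3 := mul_le_mul_of_nonneg_left hdab hb0
      nlinarith
    have hX0 : 0 ≤ Fa*d + (Fa - Fb)*b := by
      have h4 := mul_nonneg (sub_nonneg.2 hFba) hb0
      have h5 := mul_nonneg hFa0 hd0
      linarith
    have hNX : N ≤ (Fa*d + (Fa - Fb)*b)^2 := by
      have id1 : (Fa*d + (Fa - Fb)*b)^2 - (Fa^2*a^2 - 2*(Fa*Fb*p) + Fb^2*b^2)
          = 2*((Fa*(Fa-Fb))*(b^2 - p + b*d)) + Fa^2*(d^2 - (a^2 - 2*p + b^2)) := by ring
      have h6 := mul_nonneg h1 h2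
      have h7 : Fa^2*(d^2 - (a^2 - 2*p + b^2)) = 0 := by rw [hdsq]; ring
      rw [hN]
      linarith
    have hXle : Fa*d + (Fa - Fb)*b ≤ (1+sg)*Fa*d := by
      have h3 : sg * Fa * (a - b) ≤ sg * Fa * d :=
        mul_le_mul_of_nonneg_left hdab (mul_nonneg hsg0 hFa0)
      have h4 : (1+sg)*Fa*d = Fa*d + sg*Fa*d := by ring
      linarith [hub2]
    have h5 : N ≤ ((1+sg)*Fa*d)^2 := hNX.trans (pow_le_pow_left₀ hX0 hXle 2)
    have h6 : ((1+sg)*Fa*d)^2 = (1+sg)^2 * (g a / a) * d^2 := by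
      rw [mul_pow, mul_pow, hFa2]
    have h7 : g a / a ≤ 2 * (g (a+b)/(a+b)) := by
      rw [div_le_iff₀ ha]
      have h8 : g a ≤ g (a+b) := gmono a (a+b) ha.le hsa
      have h9 : g (a+b)/(a+b)*(a+b) = g (a+b) := div_mul_cancel₀ _ hs.ne'
      have h11 := mul_nonneg hgs0 (sub_nonneg.2 hba)
      nlinarith
    have h10 : (1+sg)^2 * (g a / a) * d^2 ≤ (1+sg)^2 * (2*(g (a+b)/(a+b))) * d^2 := by
      apply mul_le_mul_of_nonneg_right _ (sq_nonneg d)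
      exact mul_le_mul_of_nonneg_left h7 (sq_nonneg (1+sg))
    have h11 : (1+sg)^2 * (2*(g (a+b)/(a+b))) * d^2 = 2*(1+sg)^2 * (g (a+b)/(a+b)) * d^2 := by ring
    linarith

/-- If `g` satisfies the Orlicz structure conditions with indices
`1 ≤ i_g ≤ s_g < ∞` and `V_g(z) = (g(|z|)/|z|)^{1/2}·z` (with `V_g(0) = 0`), then there
are constants `0 < c₁ ≤ c₂` depending only on `n, i_g, s_g` such that for all
`z₁, z₂ ∈ ℝⁿ` not both zero,
`c₁·(g(|z₁|+|z₂|)/(|z₁|+|z₂|))·|z₁−z₂|² ≤ |V_g(z₁) − V_g(z₂)|²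
  ≤ c₂·(g(|z₁|+|z₂|)/(|z₁|+|z₂|))·|z₁−z₂|²`. -/
theorem orlicz_Vg_comparison
    (n : ℕ) (hn : 2 ≤ n)
    (g g' : ℝ → ℝ) (ig sg : ℝ)
    (hg_nonneg : ∀ t, 0 ≤ t → 0 ≤ g t)
    (hg_zero : ∀ t, 0 ≤ t → (g t = 0 ↔ t = 0))
    (hg_deriv : ∀ t, 0 < t → HasDerivAt g (g' t) t)
    (hg'_cont : ContinuousOn g' (Set.Ioi 0))
    (h_one_le_ig : 1 ≤ ig) (h_ig_le_sg : ig ≤ sg)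
    (h_lower : ∀ t, 0 < t → ig * g t ≤ t * g' t)
    (h_upper : ∀ t, 0 < t → t * g' t ≤ sg * g t)
    (Vg : EuclideanSpace ℝ (Fin n) → EuclideanSpace ℝ (Fin n))
    (hVg_zero : Vg 0 = 0)
    (hVg : ∀ z : EuclideanSpace ℝ (Fin n), z ≠ 0 →
      Vg z = Real.sqrt (g ‖z‖ / ‖z‖) • z) :
    ∃ c₁ c₂ : ℝ, 0 < c₁ ∧ c₁ ≤ c₂ ∧
      ∀ z₁ z₂ : EuclideanSpace ℝ (Fin n), ¬(z₁ = 0 ∧ z₂ = 0) →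
        c₁ * (g (‖z₁‖ + ‖z₂‖) / (‖z₁‖ + ‖z₂‖)) * ‖z₁ - z₂‖ ^ 2 ≤
            ‖Vg z₁ - Vg z₂‖ ^ 2 ∧
          ‖Vg z₁ - Vg z₂‖ ^ 2 ≤
            c₂ * (g (‖z₁‖ + ‖z₂‖) / (‖z₁‖ + ‖z₂‖)) * ‖z₁ - z₂‖ ^ 2 := by
  have hsg1 : 1 ≤ sg := h_one_le_ig.trans h_ig_le_sg
  have hsg0 : 0 ≤ sg := by linarith
  have hg0 : g 0 = 0 := (hg_zero 0 le_rfl).2 rfl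
  have hgpos : ∀ t, 0 < t → 0 < g t := fun t ht =>
    lt_of_le_of_ne (hg_nonneg t ht.le) fun h => ht.ne' ((hg_zero t ht.le).1 h.symm)
  have hM1 : ∀ u v : ℝ, 0 < u → u ≤ v → g u / u ≤ g v / v :=
    fun u v hu huv => orlicz_aux_M1 g g' ig hg_nonneg hg_deriv h_one_le_ig h_lower hu huv
  have hM2 : ∀ u v : ℝ, 0 < u → u ≤ v → g v * u ^ sg ≤ g u * v ^ sg := by
    intro u v hu huv
    have h := orlicz_aux_M2 g g' sg hg_deriv h_upper hu huv
    rwa [div_le_div_iff₀ (Real.rpow_pos_of_pos (hu.trans_le huv) sg)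
      (Real.rpow_pos_of_pos hu sg)] at h
  have gmono : ∀ u v : ℝ, 0 ≤ u → u ≤ v → g u ≤ g v := by
    intro u v hu huv
    rcases eq_or_lt_of_le hu with h | h
    · rw [← h, hg0]; exact hg_nonneg v (by linarith)
    rcases eq_or_lt_of_le huv with h2 | h2
    · rw [h2]
    have h3 := hM1 u v h huv
    have hvpos : 0 < v := h.trans h2
    calc g u = u * (g u / u) := by field_simp
      _ ≤ u * (g v / v) := mul_le_mul_of_nonneg_left h3 h.le
      _ ≤ v * (g v / v) :=
          mul_le_mul_of_nonneg_right huv (div_nonneg (hg_nonneg v hvpos.le) hvpos.le)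
      _ = g v := by field_simp
  set A := (2:ℝ) ^ sg with hA
  have hA2 : 2 ≤ A := by
    calc (2:ℝ) = 2 ^ (1:ℝ) := (Real.rpow_one 2).symm
      _ ≤ A := Real.rpow_le_rpow_of_exponent_le one_le_two hsg1
  have hA0 : 0 < A := by linarith
  have hDouble : ∀ u v : ℝ, 0 < u → u ≤ v → v ≤ 2*u → g v ≤ A * g u := by
    intro u v hu huv hv2
    have h1 := hM2 u v hu huv
    have h2 : g u * v ^ sg ≤ g u * ((2*u) ^ sg) :=
      mul_le_mul_of_nonneg_left (Real.rpow_le_rpow (by linarith) hv2 hsg0) (hg_nonneg u hu.le)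
    have h3 : ((2:ℝ)*u) ^ sg = A * u ^ sg := Real.mul_rpow (by norm_num) hu.le
    have hu0 : (0:ℝ) < u ^ sg := Real.rpow_pos_of_pos hu sg
    have h4 : g v * u ^ sg ≤ (A * g u) * u ^ sg := by
      rw [h3] at h2
      calc g v * u ^ sg ≤ g u * v ^ sg := h1
        _ ≤ g u * (A * u ^ sg) := h2
        _ = (A * g u) * u ^ sg := by ring
    exact le_of_mul_le_mul_right h4 hu0
  have hRatio : ∀ u v : ℝ, 0 < u → u ≤ v → g v * (u/v) ^ sg ≤ g u := by
    intro u v hu huv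
    have hv : 0 < v := hu.trans_le huv
    have h1 := hM2 u v hu huv
    have h2 : (u/v) ^ sg = u ^ sg / v ^ sg := Real.div_rpow hu.le hv.le sg
    rw [h2, ← mul_div_assoc, div_le_iff₀ (Real.rpow_pos_of_pos hv sg)]
    exact h1
  have hBern : ∀ x : ℝ, 0 ≤ x → x ≤ 1 → x - x ^ sg ≤ sg * (1 - x) := by
    intro x hx hx1
    have h := one_add_mul_self_le_rpow_one_add (s := x - 1) (by linarith) hsg1
    have h2 : (1 + (x - 1)) = x := by ring
    rw [h2] at h
    nlinarith
  have hVf : ∀ z : EuclideanSpace ℝ (Fin n), Vg z = Real.sqrt (g ‖z‖ / ‖z‖) • z := by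
    intro z
    by_cases hz : z = 0
    · rw [hz, hVg_zero, smul_zero]
    · exact hVg z hz
  have key : ∀ z₁ z₂ : EuclideanSpace ℝ (Fin n), z₁ ≠ 0 → ‖z₂‖ ≤ ‖z₁‖ →
      1/(9*A^2) * (g (‖z₁‖ + ‖z₂‖) / (‖z₁‖ + ‖z₂‖)) * ‖z₁ - z₂‖ ^ 2 ≤ ‖Vg z₁ - Vg z₂‖ ^ 2 ∧
      ‖Vg z₁ - Vg z₂‖ ^ 2 ≤ 2*(1+sg)^2 * (g (‖z₁‖ + ‖z₂‖) / (‖z₁‖ + ‖z₂‖)) * ‖z₁ - z₂‖ ^ 2 := by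
    intro z₁ z₂ hz₁ hba
    have hN : ‖Vg z₁ - Vg z₂‖ ^ 2 = Real.sqrt (g ‖z₁‖ / ‖z₁‖) ^ 2 * ‖z₁‖ ^ 2
        - 2 * (Real.sqrt (g ‖z₁‖ / ‖z₁‖) * Real.sqrt (g ‖z₂‖ / ‖z₂‖) * (inner ℝ z₁ z₂ : ℝ))
        + Real.sqrt (g ‖z₂‖ / ‖z₂‖) ^ 2 * ‖z₂‖ ^ 2 := by
      rw [hVf z₁, hVf z₂, norm_sub_sq_real, norm_smul, norm_smul, real_inner_smul_left,
        real_inner_smul_right, Real.norm_eq_abs, Real.norm_eq_abs,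
        abs_of_nonneg (Real.sqrt_nonneg _), abs_of_nonneg (Real.sqrt_nonneg _)]
      ring
    exact orlicz_scalar g sg A hsg1 hA2 hg_nonneg hg0 hgpos hM1 gmono hDouble hRatio hBern
      ‖z₁‖ ‖z₂‖ ‖z₁ - z₂‖ (inner ℝ z₁ z₂ : ℝ) (‖Vg z₁ - Vg z₂‖ ^ 2)
      (norm_pos_iff.2 hz₁) (norm_nonneg _) hba
      (real_inner_le_norm z₁ z₂) (norm_sub_norm_le z₁ z₂) (norm_sub_le z₁ z₂)
      (norm_nonneg _) (norm_sub_sq_real z₁ z₂) hN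
  refine ⟨1/(9*A^2), 2*(1+sg)^2, ?_, ?_, ?_⟩
  · positivity
  · have h1 : 1/(9*A^2) ≤ 1 := by
      rw [div_le_one (by positivity)]
      nlinarith
    nlinarith
  · intro z₁ z₂ hzz
    rcases le_total ‖z₂‖ ‖z₁‖ with h | h
    · have hz₁ : z₁ ≠ 0 := by
        intro h0
        apply hzz
        refine ⟨h0, norm_le_zero_iff.1 ?_⟩
        rw [h0, norm_zero] at h
        exact h
      exact key z₁ z₂ hz₁ h
    · have hz₂ : z₂ ≠ 0 := by
        intro h0
        apply hzz
        refine ⟨norm_le_zero_iff.1 ?_, h0⟩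
        rw [h0, norm_zero] at h
        exact h
      have hk := key z₂ z₁ hz₂ h
      rw [norm_sub_rev z₂ z₁, norm_sub_rev (Vg z₂) (Vg z₁), add_comm ‖z₂‖ ‖z₁‖] at hk
      exact hk
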